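/- For any two symmetric positive definite d×d real matrices A and B, |A^{1/2} − B^{1/2}| ≤ sqrt(min(|A^{-1}|, |B^{-1}|)) · |A − B|, where |·| denotes the operator norm. -/

import Mathlib

open MeasureTheory
open scoped ENNReal NNReal Classical
noncomputable section
open scoped RealInnerProductSpace Matrix
abbrev Ed (d : ℕ) := EuclideanSpace ℝ (Fin d)
def qf {d : ℕ} (M : Matrix (Fin d) (Fin d) ℝ) (x : Ed d) : ℝ :=
  ∑ i, ∑ j, M i j * x i * x j
def opNorm {d : ℕ} (M : Matrix (Fin d) (Fin d) ℝ) : ℝ :=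
  sSup {r | ∃ x : Ed d, ‖x‖ = 1 ∧ r = |qf M x|}
def psdSqrt {d : ℕ} (M : Matrix (Fin d) (Fin d) ℝ) : Matrix (Fin d) (Fin d) ℝ :=
  if h : M.PosSemidef then h.1.eigenvectorUnitary.1 * Matrix.diagonal ((↑) ∘ (√·) ∘ h.1.eigenvalues) *
    (star h.1.eigenvectorUnitary : Matrix (Fin d) (Fin d) ℝ) else 0
def W2sq {d : ℕ} (μ ν : Measure (Ed d)) : ℝ≥0∞ :=
  ⨅ π : {π : Measure (Ed d × Ed d) // π.map Prod.fst = μ ∧ π.map Prod.snd = ν},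
    ∫⁻ p, (‖p.1 - p.2‖₊ : ℝ≥0∞) ^ 2 ∂π.1
def emp {d : ℕ} (n : ℕ) (x : Fin n → Ed d) : Measure (Ed d) :=
  (n : ℝ≥0∞)⁻¹ • ∑ i, Measure.dirac (x i)
def convM {d : ℕ} (a : Ed d → Matrix (Fin d) (Fin d) ℝ) (x : Ed d) (μ : Measure (Ed d)) :
    Matrix (Fin d) (Fin d) ℝ := fun i j => ∫ y, a (x - y) i j ∂μ
def convV {d : ℕ} (b : Ed d → Ed d) (x : Ed d) (μ : Measure (Ed d)) : Ed d :=
  ∫ y, b (x - y) ∂μ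

lemma psdSqrt_spec {d : ℕ} (M : Matrix (Fin d) (Fin d) ℝ) (h : M.PosSemidef) :
    (psdSqrt M).PosSemidef ∧ psdSqrt M * psdSqrt M = M := by
  rw [psdSqrt, dif_pos h]
  have hU : star (h.1.eigenvectorUnitary : Matrix (Fin d) (Fin d) ℝ)
      = (h.1.eigenvectorUnitary.1)ᴴ := by
    rw [Matrix.star_eq_conjTranspose]
  have hD : Matrix.diagonal (((↑) ∘ (√·) ∘ h.1.eigenvalues) : Fin d → ℝ) *
      Matrix.diagonal (((↑) ∘ (√·) ∘ h.1.eigenvalues) : Fin d → ℝ) =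
      Matrix.diagonal (RCLike.ofReal ∘ h.1.eigenvalues) := by
    rw [Matrix.diagonal_mul_diagonal]; congr 1; funext i
    simp [Real.mul_self_sqrt (h.eigenvalues_nonneg i)]
  constructor
  · rw [hU]
    apply Matrix.PosSemidef.mul_mul_conjTranspose_same
    rw [Matrix.posSemidef_diagonal_iff]; intro i; simp [Real.sqrt_nonneg]
  · have hs := h.1.spectral_theorem
    rw [Unitary.conjStarAlgAut_apply] at hs
    conv_rhs => rw [hs]
    simp only [mul_assoc, Unitary.coe_star]
    rw [← mul_assoc (star (h.1.eigenvectorUnitary : Matrix (Fin d) (Fin d) ℝ)),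
      Unitary.coe_star_mul_self, one_mul, ← mul_assoc (Matrix.diagonal _), hD]

noncomputable def mv {d : ℕ} (M : Matrix (Fin d) (Fin d) ℝ) (x : Ed d) : Ed d :=
  WithLp.toLp 2 (M.mulVec x)

lemma qf_eq {d : ℕ} (M : Matrix (Fin d) (Fin d) ℝ) (x : Ed d) :
    qf M x = ⟪x, mv M x⟫ := by
  simp [qf, mv, PiLp.inner_apply, Matrix.mulVec, dotProduct, Finset.mul_sum]
  congr 1; ext i; rw [Finset.sum_mul]; congr 1; ext j; ring

lemma mv_symm {d : ℕ} {M : Matrix (Fin d) (Fin d) ℝ} (hM : M.IsHermitian) (x y : Ed d) :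
    ⟪mv M x, y⟫ = ⟪x, mv M y⟫ := by
  have hMt : Mᵀ = M := by
    have := hM; rwa [Matrix.IsHermitian, Matrix.conjTranspose_eq_transpose_of_trivial] at this
  simp only [mv, PiLp.inner_apply, RCLike.inner_apply, starRingEnd_apply, star_trivial,
    Matrix.mulVec, dotProduct, Finset.sum_mul, Finset.mul_sum]
  rw [Finset.sum_comm]
  refine Finset.sum_congr rfl fun i _ => Finset.sum_congr rfl fun j _ => ?_
  have h2 : M j i = M i j := by nth_rewrite 1 [← hMt]; rw [Matrix.transpose_apply]
  rw [h2]; ring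

lemma mv_mul {d : ℕ} (M N : Matrix (Fin d) (Fin d) ℝ) (x : Ed d) :
    mv (M * N) x = mv M (mv N x) := by
  simp [mv, Matrix.mulVec_mulVec]

lemma inner_self_eq {d : ℕ} (x : Ed d) : ⟪x, x⟫ = ∑ j, (x j)^2 := by
  simp only [PiLp.inner_apply, RCLike.inner_apply, conj_trivial, sq]

lemma abs_apply_le_norm {d : ℕ} (x : Ed d) (i : Fin d) : |x i| ≤ ‖x‖ := by
  have h1 : (x i)^2 ≤ ‖x‖^2 := by
    rw [← real_inner_self_eq_norm_sq, inner_self_eq]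
    exact Finset.single_le_sum (f := fun j => (x j)^2) (fun j _ => sq_nonneg _)
      (Finset.mem_univ i)
  calc |x i| = Real.sqrt ((x i)^2) := (Real.sqrt_sq_eq_abs _).symm
    _ ≤ Real.sqrt (‖x‖^2) := Real.sqrt_le_sqrt h1
    _ = ‖x‖ := Real.sqrt_sq (norm_nonneg x)

lemma bddAbove_opSet {d : ℕ} (M : Matrix (Fin d) (Fin d) ℝ) :
    BddAbove {r | ∃ x : Ed d, ‖x‖ = 1 ∧ r = |qf M x|} := by
  refine ⟨∑ i, ∑ j, |M i j|, fun r hr => ?_⟩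
  obtain ⟨x, hx, rfl⟩ := hr
  calc |qf M x| ≤ ∑ i, |∑ j, M i j * x i * x j| := Finset.abs_sum_le_sum_abs _ _
    _ ≤ ∑ i, ∑ j, |M i j * x i * x j| :=
        Finset.sum_le_sum fun i _ => Finset.abs_sum_le_sum_abs _ _
    _ ≤ ∑ i, ∑ j, |M i j| := by
        refine Finset.sum_le_sum fun i _ => Finset.sum_le_sum fun j _ => ?_
        rw [abs_mul, abs_mul]
        calc |M i j| * |x i| * |x j| ≤ |M i j| * 1 * 1 := by
              have hi := (abs_apply_le_norm x i).trans_eq hx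
              have hj := (abs_apply_le_norm x j).trans_eq hx
              gcongr
          _ = |M i j| := by ring

lemma le_opNorm {d : ℕ} (M : Matrix (Fin d) (Fin d) ℝ) {x : Ed d} (hx : ‖x‖ = 1) :
    |qf M x| ≤ opNorm M :=
  le_csSup (bddAbove_opSet M) ⟨x, hx, rfl⟩

lemma opNorm_le {d : ℕ} {M : Matrix (Fin d) (Fin d) ℝ} {c : ℝ} (hc : 0 ≤ c)
    (h : ∀ x : Ed d, ‖x‖ = 1 → |qf M x| ≤ c) : opNorm M ≤ c :=
  Real.sSup_le (fun r hr => by obtain ⟨x, hx, rfl⟩ := hr; exact h x hx) hc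

lemma opNorm_nonneg {d : ℕ} (M : Matrix (Fin d) (Fin d) ℝ) : 0 ≤ opNorm M :=
  Real.sSup_nonneg (fun r hr => by obtain ⟨x, hx, rfl⟩ := hr; positivity)

lemma spectral_bound {d : ℕ} (hd : d ≠ 0) {M : Matrix (Fin d) (Fin d) ℝ}
    (hM : M.IsHermitian) :
    ∃ v : Ed d, ‖v‖ = 1 ∧ ∃ μ : ℝ, mv M v = μ • v ∧ opNorm M ≤ |μ| := by
  have hne : Nonempty (Fin d) := ⟨⟨0, Nat.pos_of_ne_zero hd⟩⟩
  obtain ⟨i₀, -, hi₀⟩ := Finset.exists_max_image Finset.univ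
    (fun i => |hM.eigenvalues i|) ⟨Classical.arbitrary (Fin d), Finset.mem_univ _⟩
  set B := hM.eigenvectorBasis with hB
  have hmv : ∀ i, mv M (B i) = hM.eigenvalues i • B i := fun i => by
    ext k
    exact congrFun (hM.mulVec_eigenvectorBasis i) k
  have hrep : ∀ (x : Ed d) (i : Fin d), B.repr (mv M x) i = hM.eigenvalues i * B.repr x i := by
    intro x i
    rw [OrthonormalBasis.repr_apply_apply, OrthonormalBasis.repr_apply_apply,
      ← mv_symm hM, hmv i, real_inner_smul_left]
  have hqf : ∀ x : Ed d, qf M x = ∑ i, hM.eigenvalues i * (B.repr x i)^2 := by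
    intro x
    rw [qf_eq, ← B.repr.inner_map_map x (mv M x), PiLp.inner_apply]
    refine Finset.sum_congr rfl fun i _ => ?_
    simp only [RCLike.inner_apply, starRingEnd_apply, star_trivial, hrep]
    ring
  refine ⟨B i₀, B.orthonormal.1 i₀, hM.eigenvalues i₀, hmv i₀, ?_⟩
  refine opNorm_le (abs_nonneg _) fun x hx => ?_
  have hsum : ∑ i, (B.repr x i)^2 = 1 := by
    have h1 : ⟪B.repr x, B.repr x⟫ = (1:ℝ) := by
      rw [B.repr.inner_map_map, real_inner_self_eq_norm_sq, hx]; norm_num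
    rwa [inner_self_eq] at h1
  calc |qf M x| = |∑ i, hM.eigenvalues i * (B.repr x i)^2| := by rw [hqf]
    _ ≤ ∑ i, |hM.eigenvalues i * (B.repr x i)^2| := Finset.abs_sum_le_sum_abs _ _
    _ ≤ ∑ i, |hM.eigenvalues i₀| * (B.repr x i)^2 := by
        refine Finset.sum_le_sum fun i _ => ?_
        rw [abs_mul, abs_sq]
        exact mul_le_mul_of_nonneg_right (hi₀ i (Finset.mem_univ i)) (sq_nonneg _)
    _ = |hM.eigenvalues i₀| := by rw [← Finset.mul_sum, hsum, mul_one]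

lemma qf_nonneg {d : ℕ} {M : Matrix (Fin d) (Fin d) ℝ} (hM : M.PosSemidef) (x : Ed d) :
    0 ≤ qf M x := by
  have h := hM.dotProduct_mulVec_nonneg x.ofLp
  rw [qf_eq]
  simpa [dotProduct, mv, PiLp.inner_apply, Matrix.mulVec, mul_comm] using h

lemma qf_pos {d : ℕ} {M : Matrix (Fin d) (Fin d) ℝ} (hM : M.PosDef) {x : Ed d}
    (hx : x ≠ 0) : 0 < qf M x := by
  have hx' : (x : Fin d → ℝ) ≠ 0 := fun h => hx (PiLp.ext fun i => congrFun h i)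
  have h := hM.dotProduct_mulVec_pos hx'
  rw [qf_eq]
  simpa [dotProduct, mv, PiLp.inner_apply, Matrix.mulVec, mul_comm] using h

lemma psd_cs {d : ℕ} {S : Matrix (Fin d) (Fin d) ℝ} (hS : S.PosSemidef) (x y : Ed d) :
    ⟪x, mv S y⟫ * ⟪x, mv S y⟫ ≤ qf S x * qf S y := by
  obtain ⟨R, hR, hRR⟩ : ∃ R : Matrix (Fin d) (Fin d) ℝ, R.PosSemidef ∧ R * R = S :=
    ⟨psdSqrt S, (psdSqrt_spec S hS).1, (psdSqrt_spec S hS).2⟩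
  have h1 : ⟪x, mv S y⟫ = ⟪mv R x, mv R y⟫ := by
    rw [← hRR, mv_mul, ← mv_symm hR.1]
  have h2 : qf S x = ⟪mv R x, mv R x⟫ := by
    rw [qf_eq, ← hRR, mv_mul, ← mv_symm hR.1]
  have h3 : qf S y = ⟪mv R y, mv R y⟫ := by
    rw [qf_eq, ← hRR, mv_mul, ← mv_symm hR.1]
  rw [h1, h2, h3]
  exact real_inner_mul_inner_self_le _ _

lemma mv_add {d : ℕ} (M N : Matrix (Fin d) (Fin d) ℝ) (x : Ed d) :
    mv (M + N) x = mv M x + mv N x := by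
  ext i; exact congrFun (Matrix.add_mulVec M N x) i

lemma mv_smul {d : ℕ} (M : Matrix (Fin d) (Fin d) ℝ) (c : ℝ) (x : Ed d) :
    mv M (c • x) = c • mv M x := by
  ext i; exact congrFun (M.mulVec_smul c x) i

lemma mv_one {d : ℕ} (x : Ed d) : mv 1 x = x := by
  ext i; exact congrFun (Matrix.one_mulVec x) i

lemma qf_sqrt_lower {d : ℕ} (A S : Matrix (Fin d) (Fin d) ℝ) (hA : A.PosDef)
    (hS : S.PosSemidef) (hS2 : S * S = A) (v : Ed d) (hv : ‖v‖ = 1) :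
    0 < opNorm A⁻¹ ∧ 1 ≤ Real.sqrt (opNorm A⁻¹) * qf S v := by
  have hdet : S.det ≠ 0 := by
    intro h
    have := hA.det_pos
    rw [← hS2, Matrix.det_mul, h, mul_zero] at this
    exact lt_irrefl _ this
  have hSi : S * S⁻¹ = 1 := Matrix.mul_nonsing_inv _ (isUnit_iff_ne_zero.2 hdet)
  have hAinv : S⁻¹ * S⁻¹ = A⁻¹ := by rw [← hS2, Matrix.mul_inv_rev]
  have hSinv_herm : S⁻¹.IsHermitian := by
    rw [Matrix.IsHermitian, Matrix.conjTranspose_nonsing_inv, hS.1.eq]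
  have h1 : mv S (mv S⁻¹ v) = v := by rw [← mv_mul, hSi, mv_one]
  set w := ⟪v, mv S⁻¹ v⟫ with hw
  have hqw : qf S (mv S⁻¹ v) = w := by
    rw [qf_eq, h1, real_inner_comm]
  have hcs : 1 ≤ qf S v * w := by
    have := psd_cs hS v (mv S⁻¹ v)
    rw [h1, hqw, real_inner_self_eq_norm_sq, hv] at this
    linarith
  have hnsq : ‖mv S⁻¹ v‖^2 = qf A⁻¹ v := by
    rw [← real_inner_self_eq_norm_sq, mv_symm hSinv_herm, ← mv_mul, hAinv, ← qf_eq]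
  have ha : qf A⁻¹ v ≤ opNorm A⁻¹ := by
    have h2 := le_opNorm A⁻¹ hv
    rwa [abs_of_nonneg (qf_nonneg hA.inv.posSemidef v)] at h2
  have hwle : w ≤ Real.sqrt (opNorm A⁻¹) := by
    calc w ≤ ‖v‖ * ‖mv S⁻¹ v‖ := real_inner_le_norm _ _
      _ = ‖mv S⁻¹ v‖ := by rw [hv, one_mul]
      _ = Real.sqrt (‖mv S⁻¹ v‖^2) := (Real.sqrt_sq (norm_nonneg _)).symm
      _ ≤ Real.sqrt (opNorm A⁻¹) := Real.sqrt_le_sqrt (by rw [hnsq]; exact ha)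
  have hqS : 0 ≤ qf S v := qf_nonneg hS v
  have hwpos : 0 < w := by nlinarith
  have hapos : 0 < opNorm A⁻¹ := by
    have : 0 < Real.sqrt (opNorm A⁻¹) := lt_of_lt_of_le hwpos hwle
    exact (Real.sqrt_pos.1 this)
  refine ⟨hapos, ?_⟩
  nlinarith

lemma key_lemma {d : ℕ} (hd : d ≠ 0) (A B S T : Matrix (Fin d) (Fin d) ℝ)
    (hA : A.PosDef) (hB : B.PosDef) (hS : S.PosSemidef) (hT : T.PosSemidef)
    (hS2 : S * S = A) (hT2 : T * T = B) :
    opNorm (S - T) ≤ Real.sqrt (min (opNorm A⁻¹) (opNorm B⁻¹)) * opNorm (A - B) := by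
  have hD_herm : (S - T).IsHermitian := hS.1.sub hT.1
  obtain ⟨v, hv, μ, hμv, hop⟩ := spectral_bound hd hD_herm
  have hAB : S * (S - T) + (S - T) * T = A - B := by
    rw [mul_sub, sub_mul, hS2, hT2]; abel
  have hqAB : qf (A - B) v = μ * (qf S v + qf T v) := by
    rw [qf_eq, ← hAB, mv_add, inner_add_right, mv_mul, mv_mul, hμv, mv_smul,
      real_inner_smul_right, ← mv_symm hD_herm, hμv, real_inner_smul_left]
    rw [qf_eq S v, qf_eq T v]
    ring
  obtain ⟨haPos, haS⟩ := qf_sqrt_lower A S hA hS hS2 v hv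
  obtain ⟨hbPos, hbT⟩ := qf_sqrt_lower B T hB hT hT2 v hv
  set m := min (opNorm A⁻¹) (opNorm B⁻¹) with hm
  have hqSn : 0 ≤ qf S v := qf_nonneg hS v
  have hqTn : 0 ≤ qf T v := qf_nonneg hT v
  have hmain : 1 ≤ Real.sqrt m * (qf S v + qf T v) := by
    rcases le_total (opNorm A⁻¹) (opNorm B⁻¹) with hab | hab
    · rw [hm, min_eq_left hab]
      nlinarith [Real.sqrt_nonneg (opNorm A⁻¹)]
    · rw [hm, min_eq_right hab]
      nlinarith [Real.sqrt_nonneg (opNorm B⁻¹)]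
  have habs : |μ| * (qf S v + qf T v) = |qf (A - B) v| := by
    rw [hqAB, abs_mul, abs_of_nonneg (by linarith : 0 ≤ qf S v + qf T v)]
  have hABle : |qf (A - B) v| ≤ opNorm (A - B) := le_opNorm _ hv
  have hsm : 0 ≤ Real.sqrt m := Real.sqrt_nonneg m
  have habs' : |μ| * (qf S v + qf T v) ≤ opNorm (A - B) := by rw [habs]; exact hABle
  calc opNorm (S - T) ≤ |μ| := hop
    _ = |μ| * 1 := (mul_one _).symm
    _ ≤ |μ| * (Real.sqrt m * (qf S v + qf T v)) :=
        mul_le_mul_of_nonneg_left hmain (abs_nonneg μ)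
    _ = Real.sqrt m * (|μ| * (qf S v + qf T v)) := by ring
    _ ≤ Real.sqrt m * opNorm (A - B) := mul_le_mul_of_nonneg_left habs' hsm


theorem stmt1 {d : ℕ} (A B : Matrix (Fin d) (Fin d) ℝ)
    (hA : A.PosDef) (hB : B.PosDef) :
    opNorm (psdSqrt A - psdSqrt B) ≤
      Real.sqrt (min (opNorm A⁻¹) (opNorm B⁻¹)) * opNorm (A - B) := by
  rcases eq_or_ne d 0 with hd | hd
  · subst hd
    have hL : opNorm (psdSqrt A - psdSqrt B) ≤ 0 := by
      refine opNorm_le le_rfl fun x hx => ?_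
      have hx0 : x = 0 := Subsingleton.elim x 0
      rw [hx0, norm_zero] at hx
      exact absurd hx.symm one_ne_zero
    exact hL.trans (mul_nonneg (Real.sqrt_nonneg _) (opNorm_nonneg _))
  · exact key_lemma hd A B (psdSqrt A) (psdSqrt B) hA hB
      (psdSqrt_spec A hA.posSemidef).1 (psdSqrt_spec B hB.posSemidef).1
      (psdSqrt_spec A hA.posSemidef).2
      (psdSqrt_spec B hB.posSemidef).2
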